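/- arXiv:2501.01621 — 2 statements merged into one kernel-verified Lean document; each statement's English description precedes it below -/
import Mathlib

section
/- Let J ∈ R^{N×N} be invertible with σ = σ_min(J) > 0. Suppose J̃ = Σ_{c∈C} P_c J̃_c P_cᵀ and J = Σ_{c∈C} P_c J_c P_cᵀ where for each c, P_c ∈ R^{N×N_c} and ‖J_c − J̃_c‖_max ≤ δ_c with Σ_c N_c δ_c < σ, and each P_c has operator norm at most 1. Then ‖I − J^{-1} J̃‖₂ ≤ (Σ_c N_c δ_c)/σ < 1. -/
open Matrix
open scoped Matrix.Norms.L2Operator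

noncomputable def enorm {n : ℕ} (v : Fin n → ℝ) : ℝ := Real.sqrt (∑ i, (v i)^2)

noncomputable def supNorm {n : ℕ} (v : Fin n → ℝ) : ℝ := ⨆ i, |v i|

noncomputable def opNorm {m n : ℕ} (A : Matrix (Fin m) (Fin n) ℝ) : ℝ :=
  ⨆ v : {v : Fin n → ℝ // v ≠ 0}, _root_.enorm (A.mulVec v.1) / _root_.enorm v.1

noncomputable def maxNorm {m n : ℕ} (A : Matrix (Fin m) (Fin n) ℝ) : ℝ :=
  ⨆ i, ⨆ j, |A i j|

noncomputable def sigmaMin {n : ℕ} (A : Matrix (Fin n) (Fin n) ℝ) : ℝ :=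
  ⨅ v : {v : Fin n → ℝ // v ≠ 0}, _root_.enorm (A.mulVec v.1) / _root_.enorm v.1

lemma enorm_eq_norm {n : ℕ} (v : Fin n → ℝ) :
    _root_.enorm v = ‖(EuclideanSpace.equiv (Fin n) ℝ).symm v‖ := by
  rw [EuclideanSpace.norm_eq]
  simp [_root_.enorm, Real.norm_eq_abs, sq_abs]

lemma enorm_nonneg {n : ℕ} (v : Fin n → ℝ) : 0 ≤ _root_.enorm v := Real.sqrt_nonneg _

lemma enorm_pos_fin {n : ℕ} {v : Fin n → ℝ} (hv : v ≠ 0) : 0 < _root_.enorm v := by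
  rw [enorm_eq_norm]
  simpa using hv

lemma enorm_zero_fin {n : ℕ} : _root_.enorm (0 : Fin n → ℝ) = 0 := by simp [_root_.enorm]

lemma enorm_mulVec_le_norm {m n : ℕ} (A : Matrix (Fin m) (Fin n) ℝ) (v : Fin n → ℝ) :
    _root_.enorm (A.mulVec v) ≤ ‖A‖ * _root_.enorm v := by
  rw [enorm_eq_norm, enorm_eq_norm]
  exact Matrix.l2_opNorm_mulVec A ((EuclideanSpace.equiv (Fin n) ℝ).symm v)

lemma bddAbove_ratio {m n : ℕ} (A : Matrix (Fin m) (Fin n) ℝ) :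
    BddAbove (Set.range fun v : {v : Fin n → ℝ // v ≠ 0} =>
      _root_.enorm (A.mulVec v.1) / _root_.enorm v.1) := by
  refine ⟨‖A‖, ?_⟩
  rintro x ⟨v, rfl⟩
  rw [div_le_iff₀ (enorm_pos_fin v.2)]
  exact enorm_mulVec_le_norm A v.1

lemma enorm_mulVec_le_opNorm {m n : ℕ} (A : Matrix (Fin m) (Fin n) ℝ) (v : Fin n → ℝ) :
    _root_.enorm (A.mulVec v) ≤ opNorm A * _root_.enorm v := by
  by_cases hv : v = 0
  · simp [hv, Matrix.mulVec_zero, enorm_zero_fin]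
  · rw [← div_le_iff₀ (enorm_pos_fin hv)]
    exact le_ciSup (bddAbove_ratio A) (⟨v, hv⟩ : {v : Fin n → ℝ // v ≠ 0})

lemma opNorm_nonneg {m n : ℕ} (A : Matrix (Fin m) (Fin n) ℝ) : 0 ≤ opNorm A :=
  Real.iSup_nonneg fun v => div_nonneg (enorm_nonneg _) (enorm_nonneg _)

lemma opNorm_le_of {m n : ℕ} (A : Matrix (Fin m) (Fin n) ℝ) {K : ℝ} (hK : 0 ≤ K)
    (h : ∀ v, _root_.enorm (A.mulVec v) ≤ K * _root_.enorm v) : opNorm A ≤ K := by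
  refine Real.iSup_le (fun v => ?_) hK
  rw [div_le_iff₀ (enorm_pos_fin v.2)]
  exact h v.1

lemma opNorm_eq_l2 {m n : ℕ} (A : Matrix (Fin m) (Fin n) ℝ) : opNorm A = ‖A‖ := by
  refine le_antisymm (opNorm_le_of A (norm_nonneg _) (enorm_mulVec_le_norm A)) ?_
  rw [Matrix.l2_opNorm_def]
  refine ContinuousLinearMap.opNorm_le_bound _ (opNorm_nonneg A) fun x => ?_
  have := enorm_mulVec_le_opNorm A x
  rw [enorm_eq_norm, enorm_eq_norm] at this
  exact this

lemma opNorm_transpose {m n : ℕ} (A : Matrix (Fin m) (Fin n) ℝ) :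
    opNorm Aᵀ = opNorm A := by
  rw [opNorm_eq_l2, opNorm_eq_l2, ← Matrix.l2_opNorm_conjTranspose A]
  congr 1

lemma maxNorm_nonneg {m n : ℕ} (A : Matrix (Fin m) (Fin n) ℝ) : 0 ≤ maxNorm A :=
  Real.iSup_nonneg fun i => Real.iSup_nonneg fun j => abs_nonneg _

lemma abs_le_maxNorm {m n : ℕ} (A : Matrix (Fin m) (Fin n) ℝ) (i : Fin m) (j : Fin n) :
    |A i j| ≤ maxNorm A := by
  have h1 : |A i j| ≤ ⨆ j, |A i j| := le_ciSup (f := fun j => |A i j|) (Finite.bddAbove_range _) j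
  exact h1.trans (le_ciSup (f := fun i => ⨆ j, |A i j|) (Finite.bddAbove_range _) i)

lemma enorm_mulVec_le_card {n : ℕ} (A : Matrix (Fin n) (Fin n) ℝ) {δ : ℝ} (hδ0 : 0 ≤ δ)
    (hδ : ∀ i j, |A i j| ≤ δ) (v : Fin n → ℝ) :
    _root_.enorm (A.mulVec v) ≤ (n : ℝ) * δ * _root_.enorm v := by
  have key : ∀ i, (∑ j, A i j * v j) ^ 2 ≤ δ ^ 2 * ((n : ℝ) * ∑ j, (v j) ^ 2) := by
    intro i
    have h1 : |∑ j, A i j * v j| ≤ δ * ∑ j, |v j| := by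
      calc |∑ j, A i j * v j| ≤ ∑ j, |A i j * v j| := Finset.abs_sum_le_sum_abs _ _
        _ ≤ ∑ j, δ * |v j| := by
            refine Finset.sum_le_sum fun j _ => ?_
            rw [abs_mul]
            exact mul_le_mul_of_nonneg_right (hδ i j) (abs_nonneg _)
        _ = δ * ∑ j, |v j| := by rw [Finset.mul_sum]
    have h2 : (∑ j, A i j * v j) ^ 2 ≤ (δ * ∑ j, |v j|) ^ 2 := by
      rw [← sq_abs]
      exact pow_le_pow_left₀ (abs_nonneg _) h1 2
    refine h2.trans ?_
    rw [mul_pow]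
    refine mul_le_mul_of_nonneg_left ?_ (sq_nonneg δ)
    calc (∑ j, |v j|) ^ 2 ≤ (Finset.univ.card : ℝ) * ∑ j, |v j| ^ 2 :=
          sq_sum_le_card_mul_sum_sq
      _ = (n : ℝ) * ∑ j, (v j) ^ 2 := by simp [sq_abs]
  have h3 : ∑ i, (A.mulVec v i) ^ 2 ≤ ((n : ℝ) * δ) ^ 2 * ∑ j, (v j) ^ 2 := by
    calc ∑ i, (A.mulVec v i) ^ 2 ≤ ∑ _i : Fin n, δ ^ 2 * ((n : ℝ) * ∑ j, (v j) ^ 2) :=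
          Finset.sum_le_sum fun i _ => key i
      _ = ((n : ℝ) * δ) ^ 2 * ∑ j, (v j) ^ 2 := by
          simp [Finset.sum_const]
          ring
  calc _root_.enorm (A.mulVec v) = Real.sqrt (∑ i, (A.mulVec v i) ^ 2) := rfl
    _ ≤ Real.sqrt (((n : ℝ) * δ) ^ 2 * ∑ j, (v j) ^ 2) := Real.sqrt_le_sqrt h3
    _ = (n : ℝ) * δ * _root_.enorm v := by
        rw [Real.sqrt_mul (sq_nonneg _), Real.sqrt_sq (by positivity)]
        rfl

lemma sigmaMin_mul_le {n : ℕ} (J : Matrix (Fin n) (Fin n) ℝ) (v : Fin n → ℝ) :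
    sigmaMin J * _root_.enorm v ≤ _root_.enorm (J.mulVec v) := by
  by_cases hv : v = 0
  · simp [hv, enorm_zero_fin, Matrix.mulVec_zero, enorm_nonneg]
  · have h1 : sigmaMin J ≤ _root_.enorm (J.mulVec v) / _root_.enorm v :=
      ciInf_le ⟨0, by rintro x ⟨w, rfl⟩; exact div_nonneg (enorm_nonneg _) (enorm_nonneg _)⟩
        (⟨v, hv⟩ : {v : Fin n → ℝ // v ≠ 0})
    calc sigmaMin J * _root_.enorm v ≤ _root_.enorm (J.mulVec v) / _root_.enorm v * _root_.enorm v :=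
          mul_le_mul_of_nonneg_right h1 (enorm_nonneg _)
      _ = _root_.enorm (J.mulVec v) := div_mul_cancel₀ _ (enorm_pos_fin hv).ne'

lemma sum_mulVec' {n m : ℕ} {C : Type*} [Fintype C] (M : C → Matrix (Fin m) (Fin n) ℝ)
    (v : Fin n → ℝ) : (∑ c, M c).mulVec v = ∑ c, (M c).mulVec v := by
  ext i
  simp [Matrix.mulVec, dotProduct, Matrix.sum_apply, Finset.sum_mul]
  rw [Finset.sum_comm]

lemma enorm_sum_le_fin {n : ℕ} {C : Type*} [Fintype C] (f : C → (Fin n → ℝ)) :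
    _root_.enorm (∑ c, f c) ≤ ∑ c, _root_.enorm (f c) := by
  simp only [enorm_eq_norm]
  rw [map_sum]
  exact norm_sum_le _ _

theorem stmt_6 {N : ℕ} {C : Type*} [Fintype C] (Nc : C → ℕ)
    (Pc : ∀ c : C, Matrix (Fin N) (Fin (Nc c)) ℝ)
    (Jc Jtc : ∀ c : C, Matrix (Fin (Nc c)) (Fin (Nc c)) ℝ)
    (J Jt : Matrix (Fin N) (Fin N) ℝ) (σ : ℝ) (δ : C → ℝ)
    (hJ : J = ∑ c, Pc c * Jc c * (Pc c)ᵀ)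
    (hJt : Jt = ∑ c, Pc c * Jtc c * (Pc c)ᵀ)
    (hJunit : IsUnit J) (hσ : σ = sigmaMin J) (hσpos : 0 < σ)
    (hδ : ∀ c, maxNorm (Jc c - Jtc c) ≤ δ c)
    (hsum : ∑ c, (Nc c : ℝ) * δ c < σ)
    (hP : ∀ c, opNorm (Pc c) ≤ 1) :
    opNorm (1 - J⁻¹ * Jt) ≤ (∑ c, (Nc c : ℝ) * δ c) / σ ∧
      (∑ c, (Nc c : ℝ) * δ c) / σ < 1 := by
  set D := ∑ c, (Nc c : ℝ) * δ c with hD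
  have hδ0 : ∀ c, 0 ≤ δ c := fun c => (maxNorm_nonneg _).trans (hδ c)
  have hD0 : 0 ≤ D := Finset.sum_nonneg fun c _ =>
    mul_nonneg (Nat.cast_nonneg _) (hδ0 c)
  refine ⟨?_, (div_lt_one hσpos).mpr hsum⟩
  have hdet : IsUnit J.det := (Matrix.isUnit_iff_isUnit_det J).mp hJunit
  -- key estimate on J - Jt
  have key : ∀ v : Fin N → ℝ, _root_.enorm ((J - Jt).mulVec v) ≤ D * _root_.enorm v := by
    intro v
    have hJJt : J - Jt = ∑ c, Pc c * (Jc c - Jtc c) * (Pc c)ᵀ := by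
      rw [hJ, hJt, ← Finset.sum_sub_distrib]
      refine Finset.sum_congr rfl fun c _ => ?_
      rw [Matrix.mul_sub, Matrix.sub_mul]
    rw [hJJt, sum_mulVec']
    refine (enorm_sum_le_fin _).trans ?_
    rw [hD, Finset.sum_mul]
    refine Finset.sum_le_sum fun c _ => ?_
    have step1 : _root_.enorm ((Pc c * (Jc c - Jtc c) * (Pc c)ᵀ).mulVec v)
        = _root_.enorm ((Pc c).mulVec (((Jc c - Jtc c)).mulVec (((Pc c)ᵀ).mulVec v))) := by
      rw [Matrix.mulVec_mulVec, Matrix.mulVec_mulVec]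
    rw [step1]
    have hPt : _root_.enorm (((Pc c)ᵀ).mulVec v) ≤ _root_.enorm v := by
      have := enorm_mulVec_le_opNorm ((Pc c)ᵀ) v
      rw [opNorm_transpose] at this
      refine this.trans ?_
      calc opNorm (Pc c) * _root_.enorm v ≤ 1 * _root_.enorm v :=
            mul_le_mul_of_nonneg_right (hP c) (enorm_nonneg _)
        _ = _root_.enorm v := one_mul _
    have hE : _root_.enorm (((Jc c - Jtc c)).mulVec (((Pc c)ᵀ).mulVec v))
        ≤ (Nc c : ℝ) * δ c * _root_.enorm v := by
      refine (enorm_mulVec_le_card _ (hδ0 c)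
        (fun i j => (abs_le_maxNorm _ i j).trans (hδ c)) _).trans ?_
      exact mul_le_mul_of_nonneg_left hPt
        (mul_nonneg (Nat.cast_nonneg _) (hδ0 c))
    calc _root_.enorm ((Pc c).mulVec _) ≤ opNorm (Pc c) * _root_.enorm (((Jc c - Jtc c)).mulVec
            (((Pc c)ᵀ).mulVec v)) := enorm_mulVec_le_opNorm _ _
      _ ≤ 1 * ((Nc c : ℝ) * δ c * _root_.enorm v) := by
          refine mul_le_mul (hP c) hE (enorm_nonneg _) zero_le_one
      _ = (Nc c : ℝ) * δ c * _root_.enorm v := one_mul _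
  -- inverse bound
  have hinv : ∀ u : Fin N → ℝ, _root_.enorm (J⁻¹.mulVec u) ≤ _root_.enorm u / σ := by
    intro u
    rw [le_div_iff₀ hσpos, mul_comm]
    calc σ * _root_.enorm (J⁻¹.mulVec u) ≤ _root_.enorm (J.mulVec (J⁻¹.mulVec u)) := by
          rw [hσ]; exact sigmaMin_mul_le J _
      _ = _root_.enorm u := by
          rw [Matrix.mulVec_mulVec, Matrix.mul_nonsing_inv J hdet, Matrix.one_mulVec]
  refine opNorm_le_of _ (div_nonneg hD0 hσpos.le) fun v => ?_
  have h1 : (1 - J⁻¹ * Jt) = J⁻¹ * (J - Jt) := by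
    rw [Matrix.mul_sub, Matrix.nonsing_inv_mul J hdet]
  rw [h1, ← Matrix.mulVec_mulVec]
  calc _root_.enorm (J⁻¹.mulVec ((J - Jt).mulVec v)) ≤ _root_.enorm ((J - Jt).mulVec v) / σ := hinv _
    _ ≤ D * _root_.enorm v / σ := div_le_div_of_nonneg_right (key v) hσpos.le
    _ = D / σ * _root_.enorm v := by ring
end

section
/- Let G: R^N → R^N be continuously differentiable, and suppose there exist v ∈ R^N and constants ε, δ > 0 such that ‖G(v)‖₂ ≤ ε, DG(v) is invertible with ‖DG(v)^{-1}‖₂ ≤ δ, and DG is Lipschitz on B̄(v, 2δε) with Lipschitz constant M satisfying 2δ·M·(2δε) ≤ 1 (i.e., taking L(α) = Mα in the BRR hypotheses, 2δL(2δε) ≤ 1). Then there exists u ∈ B̄(v, 2δε) with G(u) = 0. -/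
theorem stmt_17 {N : ℕ} (G : EuclideanSpace ℝ (Fin N) → EuclideanSpace ℝ (Fin N))
    (hG : ContDiff ℝ 1 G) (v : EuclideanSpace ℝ (Fin N)) (ε δ M : ℝ)
    (hε : 0 < ε) (hδ : 0 < δ) (hM : 0 ≤ M)
    (hGv : ‖G v‖ ≤ ε)
    (hDGv : IsUnit (fderiv ℝ G v))
    (hinv : ‖Ring.inverse (fderiv ℝ G v)‖ ≤ δ)
    (hLip : ∀ x ∈ Metric.closedBall v (2 * δ * ε), ∀ y ∈ Metric.closedBall v (2 * δ * ε),
      ‖fderiv ℝ G x - fderiv ℝ G y‖ ≤ M * ‖x - y‖)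
    (hcond : 2 * δ * (M * (2 * δ * ε)) ≤ 1) :
    ∃ u ∈ Metric.closedBall v (2 * δ * ε), G u = 0 := by
  set r : ℝ := 2 * δ * ε with hr_def
  have hr : 0 < r := by positivity
  set T : EuclideanSpace ℝ (Fin N) →L[ℝ] EuclideanSpace ℝ (Fin N) := fderiv ℝ G v with hT
  set A : EuclideanSpace ℝ (Fin N) →L[ℝ] EuclideanSpace ℝ (Fin N) := Ring.inverse T with hA
  have hAT : ∀ w : EuclideanSpace ℝ (Fin N), A (T w) = w := by
    intro w
    have h1 : A * T = 1 := Ring.inverse_mul_cancel T hDGv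
    have := congrArg (fun f : EuclideanSpace ℝ (Fin N) →L[ℝ] EuclideanSpace ℝ (Fin N) => f w) h1
    simpa [ContinuousLinearMap.mul_apply] using this
  have hTA : ∀ w : EuclideanSpace ℝ (Fin N), T (A w) = w := by
    intro w
    have h1 : T * A = 1 := Ring.mul_inverse_cancel T hDGv
    have := congrArg (fun f : EuclideanSpace ℝ (Fin N) →L[ℝ] EuclideanSpace ℝ (Fin N) => f w) h1
    simpa [ContinuousLinearMap.mul_apply] using this
  have hAnorm : ∀ w : EuclideanSpace ℝ (Fin N), ‖A w‖ ≤ δ * ‖w‖ := by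
    intro w
    calc ‖A w‖ ≤ ‖A‖ * ‖w‖ := A.le_opNorm w
      _ ≤ δ * ‖w‖ := by gcongr
  have hdiff : Differentiable ℝ G := hG.differentiable one_ne_zero
  -- mean value estimate for g := G - T
  have hMV : ∀ x ∈ Metric.closedBall v r, ∀ y ∈ Metric.closedBall v r,
      ‖(G x - T x) - (G y - T y)‖ ≤ M * r * ‖x - y‖ := by
    intro x hx y hy
    have hconv : Convex ℝ (Metric.closedBall v r) := convex_closedBall v r
    have hdiffg : ∀ z ∈ Metric.closedBall v r,
        DifferentiableAt ℝ (fun z => G z - T z) z := fun z _ =>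
      (hdiff z).sub (T.differentiableAt)
    have hbound : ∀ z ∈ Metric.closedBall v r,
        ‖fderiv ℝ (fun z => G z - T z) z‖ ≤ M * r := by
      intro z hz
      have : fderiv ℝ (fun z => G z - T z) z = fderiv ℝ G z - T := by
        rw [fderiv_fun_sub (hdiff z) T.differentiableAt, T.fderiv]
      rw [this]
      have hv : v ∈ Metric.closedBall v r := Metric.mem_closedBall_self hr.le
      have := hLip z hz v hv
      calc ‖fderiv ℝ G z - T‖ ≤ M * ‖z - v‖ := this
        _ ≤ M * r := by
          gcongr
          simpa [dist_eq_norm] using hz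
    exact hconv.norm_image_sub_le_of_norm_fderiv_le hdiffg hbound hy hx
  set Φ : EuclideanSpace ℝ (Fin N) → EuclideanSpace ℝ (Fin N) := fun x => x - A (G x) with hΦ
  have hk : M * r * δ ≤ 1 / 2 := by nlinarith
  have hlipΦ : ∀ x ∈ Metric.closedBall v r, ∀ y ∈ Metric.closedBall v r,
      ‖Φ x - Φ y‖ ≤ (1 / 2) * ‖x - y‖ := by
    intro x hx y hy
    have key : Φ x - Φ y = A ((T (x - y)) - (G x - G y)) := by
      simp only [hΦ]
      rw [map_sub A, hAT, map_sub A]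
      abel
    rw [key]
    have h1 : ‖A ((T (x - y)) - (G x - G y))‖ ≤ δ * ‖(T (x - y)) - (G x - G y)‖ :=
      hAnorm _
    have h2 : (T (x - y)) - (G x - G y) = -((G x - T x) - (G y - T y)) := by
      rw [map_sub]; abel
    have h3 : ‖(T (x - y)) - (G x - G y)‖ ≤ M * r * ‖x - y‖ := by
      rw [h2, norm_neg]; exact hMV x hx y hy
    calc ‖A ((T (x - y)) - (G x - G y))‖ ≤ δ * (M * r * ‖x - y‖) := by
          refine h1.trans ?_; gcongr
      _ = (M * r * δ) * ‖x - y‖ := by ring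
      _ ≤ (1 / 2) * ‖x - y‖ := by gcongr
  have hvmem : v ∈ Metric.closedBall v r := Metric.mem_closedBall_self hr.le
  have hΦv : ‖Φ v - v‖ ≤ δ * ε := by
    have : Φ v - v = -(A (G v)) := by simp [hΦ]
    rw [this, norm_neg]
    calc ‖A (G v)‖ ≤ δ * ‖G v‖ := hAnorm _
      _ ≤ δ * ε := by gcongr
  have hmaps : ∀ x ∈ Metric.closedBall v r, Φ x ∈ Metric.closedBall v r := by
    intro x hx
    have hx' : ‖x - v‖ ≤ r := by simpa [dist_eq_norm] using hx
    have : ‖Φ x - v‖ ≤ ‖Φ x - Φ v‖ + ‖Φ v - v‖ := by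
      simpa using norm_sub_le_norm_sub_add_norm_sub (Φ x) (Φ v) v
    have h4 : ‖Φ x - v‖ ≤ (1 / 2) * r + δ * ε := by
      refine this.trans (add_le_add ?_ hΦv)
      calc ‖Φ x - Φ v‖ ≤ (1 / 2) * ‖x - v‖ := hlipΦ x hx v hvmem
        _ ≤ (1 / 2) * r := by gcongr
    have : (1 / 2) * r + δ * ε = r := by rw [hr_def]; ring
    rw [Metric.mem_closedBall, dist_eq_norm]
    linarith [h4]
  -- Banach fixed point on the closed ball
  set s : Set (EuclideanSpace ℝ (Fin N)) := Metric.closedBall v r with hs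
  have hsc : IsClosed s := Metric.isClosed_closedBall
  haveI : CompleteSpace s := hsc.completeSpace_coe
  haveI : Nonempty s := ⟨⟨v, hvmem⟩⟩
  set F : s → s := fun x => ⟨Φ x, hmaps x x.2⟩ with hF
  have hlipF : LipschitzWith (1 / 2 : NNReal) F := by
    apply LipschitzWith.of_dist_le_mul
    intro x y
    have := hlipΦ x x.2 y y.2
    simpa [hF, Subtype.dist_eq, dist_eq_norm] using this
  have hcontr : ContractingWith (1 / 2 : NNReal) F :=
    ⟨by rw [← NNReal.coe_lt_coe]; norm_num, hlipF⟩
  set u : s := ContractingWith.fixedPoint F hcontr with hu_def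
  have hfix : F u = u := hcontr.fixedPoint_isFixedPt
  have hΦu : Φ u = (u : EuclideanSpace ℝ (Fin N)) := congrArg Subtype.val hfix
  have hAGu : A (G u) = 0 := by
    have : (u : EuclideanSpace ℝ (Fin N)) - A (G u) = u := hΦu
    have := sub_eq_self.mp this
    exact this
  have hGu : G u = 0 := by
    have := congrArg T hAGu
    rw [hTA] at this
    simpa using this
  exact ⟨u, u.2, hGu⟩
end
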